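/- Let H* = F₂[y₁,…,y_N] ⊗ Δ(x₁,…,x_N) be the free loop space cohomology of a space X with H*(X;F₂) polynomial, and let Dlcop be a product on H* satisfying: (i) Dlcop(a ⊗ x_i b) = x_i·Dlcop(a⊗b) + Dlcop(a x_i ⊗ b); (ii) Dlcop(Px_{i₁}⋯x_{i_l} ⊗ 1) = 0 if {i₁,…,i_l} ⊊ {1,…,N} and Dlcop(P x₁⋯x_N ⊗ 1) = P; (iii) Dlcop is F₂[y]⊗F₂[y]-bilinear; and Dlcop is commutative. Then for any subsets I, J ⊆ {1,…,N}: Dlcop(x_I ⊗ x_J) = Dlcop(x₁⋯x_N ⊗ x_{I∩J}) if I ∪ J = {1,…,N}, and Dlcop(x_I ⊗ x_J) = 0 otherwise. -/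

import Mathlib

open Finset

section Aux

variable {H : Type*} [CommRing H] {N : ℕ}

private lemma D_zero_left (D : H → H → H)
    (haddl : ∀ a b c : H, D (a + b) c = D a c + D b c) (c : H) : D 0 c = 0 := by
  have h := haddl 0 0 c
  rw [add_zero] at h
  have := add_left_cancel (a := D 0 c) (b := D 0 c) (c := 0) (by rw [add_zero]; exact h.symm)
  exact this

private lemma D_sum_left (D : H → H → H)
    (haddl : ∀ a b c : H, D (a + b) c = D a c + D b c)
    {α : Type*} (s : Finset α) (f : α → H) (c : H) :
    D (∑ i ∈ s, f i) c = ∑ i ∈ s, D (f i) c := by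
  classical
  induction s using Finset.induction_on with
  | empty => simpa using D_zero_left D haddl c
  | insert _ _ hj ih => rw [Finset.sum_insert hj, haddl, ih, Finset.sum_insert hj]

/-- Iterated Leibniz rule. -/
private lemma leibniz (x : Fin N → H) (D : H → H → H)
    (hrel : ∀ (a b : H) (i : Fin N), D a (x i * b) = x i * D a b + D (a * x i) b) :
    ∀ (J : Finset (Fin N)) (a : H),
      D a (∏ j ∈ J, x j)
        = ∑ K ∈ J.powerset, (∏ j ∈ J \ K, x j) * D (a * ∏ k ∈ K, x k) 1 := by
  intro J
  induction J using Finset.induction_on with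
  | empty => intro a; simp
  | @insert j J' hj ih =>
      intro a
      rw [Finset.prod_insert hj, hrel, ih a, ih (a * x j), Finset.powerset_insert,
        Finset.sum_union, Finset.sum_image, Finset.mul_sum]
      · congr 1
        · refine Finset.sum_congr rfl fun K hK => ?_
          have hjK : j ∉ K := fun h => hj (Finset.mem_powerset.mp hK h)
          have hsd : insert j J' \ K = insert j (J' \ K) := by
            ext i
            simp only [Finset.mem_sdiff, Finset.mem_insert]
            constructor
            · rintro ⟨h1 | h1, h2⟩
              · exact Or.inl h1
              · exact Or.inr ⟨h1, h2⟩
            · rintro (rfl | ⟨h1, h2⟩)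
              · exact ⟨Or.inl rfl, hjK⟩
              · exact ⟨Or.inr h1, h2⟩
          rw [hsd, Finset.prod_insert (fun h => hj (Finset.mem_sdiff.mp h).1)]
          ring
        · refine Finset.sum_congr rfl fun K hK => ?_
          have hjK : j ∉ K := fun h => hj (Finset.mem_powerset.mp hK h)
          have hsd : insert j J' \ insert j K = J' \ K := by
            ext i
            simp only [Finset.mem_sdiff, Finset.mem_insert, not_or]
            constructor
            · rintro ⟨h1 | h1, h2, h3⟩
              · exact absurd h1 h2
              · exact ⟨h1, h3⟩
            · rintro ⟨h1, h2⟩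
              exact ⟨Or.inr h1, fun h => hj (h ▸ h1), h2⟩
          rw [hsd, Finset.prod_insert hjK]
          ring_nf
      · intro K₁ h₁ K₂ h₂ hKK
        have hj₁ : j ∉ K₁ := fun h => hj (Finset.mem_powerset.mp (Finset.mem_coe.mp h₁) h)
        have hj₂ : j ∉ K₂ := fun h => hj (Finset.mem_powerset.mp (Finset.mem_coe.mp h₂) h)
        have := congrArg (fun s => Finset.erase s j) hKK
        simpa [Finset.erase_insert hj₁, Finset.erase_insert hj₂] using this
      · rw [Finset.disjoint_left]
        intro K hK1 hK2
        obtain ⟨K', _, rfl⟩ := Finset.mem_image.mp hK2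
        exact hj (Finset.mem_powerset.mp hK1 (Finset.mem_insert_self j K'))

private lemma sum_update_apply {M : Type*} [AddCommMonoid M] (g : ℕ → M)
    (f : Fin N → ℕ) (i : Fin N) (b : ℕ) :
    ∑ k, g (Function.update f i b k) = g b + ∑ k ∈ Finset.univ.erase i, g (f k) := by
  classical
  rw [Finset.sum_congr rfl (fun k _ => show g (Function.update f i b k)
      = Function.update (fun k => g (f k)) i (g b) k by
    by_cases hk : k = i
    · subst hk; simp
    · simp [Function.update_of_ne hk]),
    Finset.sum_update_of_mem (Finset.mem_univ i), Finset.sdiff_singleton_eq_erase]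

private lemma prod_update_apply (x : Fin N → H) (f : Fin N → ℕ) (i : Fin N) (b : ℕ) :
    ∏ k, x k ^ (Function.update f i b k) = x i ^ b * ∏ k ∈ Finset.univ.erase i, x k ^ f k := by
  classical
  rw [Finset.prod_congr rfl (fun k _ => show x k ^ (Function.update f i b k)
      = Function.update (fun k => x k ^ f k) i (x i ^ b) k by
    by_cases hk : k = i
    · subst hk; simp
    · simp [Function.update_of_ne hk]),
    Finset.prod_update_of_mem (Finset.mem_univ i), Finset.sdiff_singleton_eq_erase]

private lemma prod_update_sub2 (x : Fin N → H) (f : Fin N → ℕ) (i : Fin N)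
    (hi : 2 ≤ f i) :
    ∏ k, x k ^ f k
      = (x i * x i) * ∏ k, x k ^ (Function.update f i (f i - 2) k) := by
  classical
  have hpow : x i ^ f i = x i * x i * x i ^ (f i - 2) := by
    rw [← pow_two, ← pow_add]
    congr 1
    omega
  calc ∏ k, x k ^ f k = x i ^ f i * ∏ k ∈ Finset.univ.erase i, x k ^ f k :=
        (Finset.mul_prod_erase _ _ (Finset.mem_univ i)).symm
    _ = (x i * x i) * (x i ^ (f i - 2) * ∏ k ∈ Finset.univ.erase i, x k ^ f k) := by
        rw [hpow]; ring
    _ = (x i * x i) * ∏ k, x k ^ (Function.update f i (f i - 2) k) := by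
        rw [prod_update_apply]

private lemma prod_update_succ (x : Fin N → H) (f : Fin N → ℕ) (j : Fin N) :
    ∏ k, x k ^ (Function.update f j (f j + 1) k) = x j * ∏ k, x k ^ f k := by
  classical
  rw [prod_update_apply,
    ← Finset.mul_prod_erase Finset.univ (fun k => x k ^ f k) (Finset.mem_univ j)]
  ring

end Aux

/-- Let `H^* = F₂[y₁,…,y_N] ⊗ Δ(x₁,…,x_N)` be the free loop space
cohomology of a space `X` with `H^*(X;F₂)` polynomial: we model it as a commutative
`F₂`-algebra `H` containing elements `x i` and `y i`, in which squares of the `x i` are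
polynomial combinations `x i² = ∑ⱼ x j · P j(y)` (coming from Steenrod operations), and
whose products `P(y)·x_I` make sense via `aeval y`.  Let `Dlcop = D` be a commutative,
(bi)additive product satisfying:
(i)  `D a (x i · b) = x i · D a b + D (a · x i) b`;
(ii) `D (P(y)·x_I) 1 = 0` for `I ⊊ {1,…,N}` and `D (P(y)·x₁⋯x_N) 1 = P(y)`;
(iii) `D` is `F₂[y] ⊗ F₂[y]`-bilinear.
Then for all subsets `I, J ⊆ {1,…,N}`:
`D x_I x_J = D (x₁⋯x_N) x_{I∩J}` if `I ∪ J = {1,…,N}`, and `D x_I x_J = 0` otherwise. -/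
theorem stmt10 {H : Type*} [CommRing H] [Algebra (ZMod 2) H] {N : ℕ}
    (x y : Fin N → H) (D : H → H → H)
    (haddl : ∀ a b c : H, D (a + b) c = D a c + D b c)
    (haddr : ∀ a b c : H, D a (b + c) = D a b + D a c)
    (hsq : ∀ i : Fin N, ∃ P : Fin N → MvPolynomial (Fin N) (ZMod 2),
      x i * x i = ∑ j, x j * MvPolynomial.aeval y (P j))
    (hrel : ∀ (a b : H) (i : Fin N), D a (x i * b) = x i * D a b + D (a * x i) b)
    (hvanish : ∀ (P : MvPolynomial (Fin N) (ZMod 2)) (I : Finset (Fin N)),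
      I ≠ Finset.univ → D (MvPolynomial.aeval y P * ∏ i ∈ I, x i) 1 = 0)
    (hfull : ∀ P : MvPolynomial (Fin N) (ZMod 2),
      D (MvPolynomial.aeval y P * ∏ i, x i) 1 = MvPolynomial.aeval y P)
    (hbilin : ∀ (P Q : MvPolynomial (Fin N) (ZMod 2)) (a b : H),
      D (MvPolynomial.aeval y P * a) (MvPolynomial.aeval y Q * b)
        = MvPolynomial.aeval y P * MvPolynomial.aeval y Q * D a b)
    (hcomm : ∀ a b : H, D a b = D b a) :
    ∀ I J : Finset (Fin N),
      (I ∪ J = Finset.univ →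
        D (∏ i ∈ I, x i) (∏ j ∈ J, x j) = D (∏ i, x i) (∏ k ∈ I ∩ J, x k)) ∧
      (I ∪ J ≠ Finset.univ → D (∏ i ∈ I, x i) (∏ j ∈ J, x j) = 0) := by
  classical
  -- pulling scalars out of the first slot
  have hscal : ∀ (P : MvPolynomial (Fin N) (ZMod 2)) (a : H),
      D (MvPolynomial.aeval y P * a) 1 = MvPolynomial.aeval y P * D a 1 := by
    intro P a
    have := hbilin P 1 a 1
    simpa using this
  -- indicator representation of products
  have hIx : ∀ I : Finset (Fin N),
      (∏ i ∈ I, x i) = ∏ i, x i ^ (if i ∈ I then 1 else 0) := by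
    intro I
    rw [show (∏ i ∈ I, x i) = ∏ i ∈ Finset.univ.filter (· ∈ I), x i by
          congr 1; ext i; simp, Finset.prod_filter]
    exact Finset.prod_congr rfl fun i _ => by by_cases h : i ∈ I <;> simp [h]
  -- the vanishing lemma, by induction on total degree
  have hvan : ∀ (n : ℕ) (e : Fin N → ℕ), (∑ i, e i) ≤ n →
      ∀ P : MvPolynomial (Fin N) (ZMod 2), (∑ i, (e i + 1) / 2) < N →
      D (MvPolynomial.aeval y P * ∏ i, x i ^ e i) 1 = 0 := by
    intro n
    induction n with
    | zero =>
        intro e he P hlt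
        have he0 : ∀ i, e i = 0 := fun i => Nat.le_zero.mp
          (le_trans (Finset.single_le_sum (fun k _ => Nat.zero_le _) (Finset.mem_univ i)) he)
        have h1 : (∏ i, x i ^ e i) = ∏ i ∈ (∅ : Finset (Fin N)), x i := by simp [he0]
        rw [h1]
        apply hvanish
        intro hc
        have hN : 0 < N := lt_of_le_of_lt (Nat.zero_le _) hlt
        have hcard := congrArg Finset.card hc
        simp only [Finset.card_empty, Finset.card_univ, Fintype.card_fin] at hcard
        omega
    | succ n ih =>
        intro e he P hlt
        by_cases hsf : ∀ i, e i ≤ 1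
        · -- square-free case
          have h1 : (∏ i, x i ^ e i) = ∏ i ∈ Finset.univ.filter (fun i => e i = 1), x i := by
            rw [Finset.prod_filter]
            refine Finset.prod_congr rfl fun i _ => ?_
            rcases Nat.le_one_iff_eq_zero_or_eq_one.mp (hsf i) with h0 | h0 <;> simp [h0]
          rw [h1]
          apply hvanish
          intro hc
          have hcard : (Finset.univ.filter (fun i => e i = 1)).card
              ≤ ∑ i, (e i + 1) / 2 := by
            rw [Finset.card_filter]
            refine Finset.sum_le_sum fun i _ => ?_
            by_cases h : e i = 1 <;> simp [h]
          rw [hc, Finset.card_univ, Fintype.card_fin] at hcard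
          omega
        · push_neg at hsf
          obtain ⟨i, hi⟩ := hsf
          have hi2 : 2 ≤ e i := hi
          obtain ⟨Pf, hPf⟩ := hsq i
          have hmain : MvPolynomial.aeval y P * ∏ k, x k ^ e k
              = ∑ j, MvPolynomial.aeval y (P * Pf j)
                  * ∏ k, x k ^ (Function.update (Function.update e i (e i - 2)) j
                      ((Function.update e i (e i - 2)) j + 1) k) := by
            rw [prod_update_sub2 x e i hi2, hPf, Finset.sum_mul, Finset.mul_sum]
            refine Finset.sum_congr rfl fun j _ => ?_
            rw [map_mul, prod_update_succ x (Function.update e i (e i - 2)) j]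
            ring
          rw [hmain, D_sum_left D haddl]
          refine Finset.sum_eq_zero fun j _ => ?_
          have hs1 : ∑ k, Function.update e i (e i - 2) k
              = (e i - 2) + ∑ k ∈ Finset.univ.erase i, e k :=
            sum_update_apply (fun m => m) e i (e i - 2)
          have hs2 : ∑ k, e k = e i + ∑ k ∈ Finset.univ.erase i, e k :=
            (Finset.add_sum_erase Finset.univ e (Finset.mem_univ i)).symm
          have hs3 : ∑ k, Function.update (Function.update e i (e i - 2)) j
                ((Function.update e i (e i - 2)) j + 1) k
              = ((Function.update e i (e i - 2)) j + 1)
                + ∑ k ∈ Finset.univ.erase j, Function.update e i (e i - 2) k :=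
            sum_update_apply (fun m => m) (Function.update e i (e i - 2)) j _
          have hs4 : ∑ k, Function.update e i (e i - 2) k
              = (Function.update e i (e i - 2)) j
                + ∑ k ∈ Finset.univ.erase j, Function.update e i (e i - 2) k :=
            (Finset.add_sum_erase Finset.univ (Function.update e i (e i - 2))
              (Finset.mem_univ j)).symm
          have hc1 : ∑ k, ((Function.update e i (e i - 2)) k + 1) / 2
              = (e i - 2 + 1) / 2 + ∑ k ∈ Finset.univ.erase i, (e k + 1) / 2 :=
            sum_update_apply (fun m => (m + 1) / 2) e i (e i - 2)
          have hc2 : ∑ k, (e k + 1) / 2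
              = (e i + 1) / 2 + ∑ k ∈ Finset.univ.erase i, (e k + 1) / 2 :=
            (Finset.add_sum_erase Finset.univ (fun k => (e k + 1) / 2)
              (Finset.mem_univ i)).symm
          have hc3 : ∑ k, ((Function.update (Function.update e i (e i - 2)) j
                ((Function.update e i (e i - 2)) j + 1)) k + 1) / 2
              = ((Function.update e i (e i - 2)) j + 1 + 1) / 2
                + ∑ k ∈ Finset.univ.erase j, ((Function.update e i (e i - 2)) k + 1) / 2 :=
            sum_update_apply (fun m => (m + 1) / 2) (Function.update e i (e i - 2)) j _
          have hc4 : ∑ k, ((Function.update e i (e i - 2)) k + 1) / 2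
              = ((Function.update e i (e i - 2)) j + 1) / 2
                + ∑ k ∈ Finset.univ.erase j, ((Function.update e i (e i - 2)) k + 1) / 2 :=
            (Finset.add_sum_erase Finset.univ
              (fun k => ((Function.update e i (e i - 2)) k + 1) / 2) (Finset.mem_univ j)).symm
          exact ih _ (by omega) (P * Pf j) (by omega)
  -- the vanishing corollary for products of two square-free monomials
  have hvan2 : ∀ I K : Finset (Fin N), I ∪ K ≠ Finset.univ →
      D ((∏ i ∈ I, x i) * ∏ k ∈ K, x k) 1 = 0 := by
    intro I K hIK
    set e : Fin N → ℕ := fun i => (if i ∈ I then 1 else 0) + (if i ∈ K then 1 else 0) with he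
    have h1 : (∏ i ∈ I, x i) * ∏ k ∈ K, x k = ∏ i, x i ^ e i := by
      rw [hIx I, hIx K, ← Finset.prod_mul_distrib]
      exact Finset.prod_congr rfl fun i _ => by rw [← pow_add]
    have h2 : ∑ i, (e i + 1) / 2 = (I ∪ K).card := by
      rw [Finset.card_eq_sum_ones (I ∪ K), ← Finset.sum_filter_add_sum_filter_not
        Finset.univ (· ∈ I ∪ K) (fun i => (e i + 1) / 2)]
      have hfil : Finset.univ.filter (· ∈ I ∪ K) = I ∪ K := by ext i; simp
      rw [hfil]
      have hz : ∑ i ∈ Finset.univ.filter (¬ · ∈ I ∪ K), (e i + 1) / 2 = 0 := by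
        refine Finset.sum_eq_zero fun i hmem => ?_
        have : i ∉ I ∪ K := by simpa using (Finset.mem_filter.mp hmem).2
        have hI : i ∉ I := fun h => this (Finset.mem_union_left _ h)
        have hK : i ∉ K := fun h => this (Finset.mem_union_right _ h)
        simp [he, hI, hK]
      rw [hz, add_zero]
      refine Finset.sum_congr rfl fun i hmem => ?_
      by_cases hI : i ∈ I <;> by_cases hK : i ∈ K
      · simp [he, hI, hK]
      · simp [he, hI, hK]
      · simp [he, hI, hK]
      · exact absurd hmem (by simp [hI, hK])
    have h3 : (I ∪ K).card < N := by
      have hss : I ∪ K ⊂ Finset.univ := Finset.ssubset_univ_iff.mpr hIK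
      have := Finset.card_lt_card hss
      rwa [Finset.card_univ, Fintype.card_fin] at this
    have := hvan (∑ i, e i) e le_rfl 1 (by rw [h2]; exact h3)
    rw [map_one, one_mul, ← h1] at this
    exact this
  -- product of two square-free monomials, regrouped
  have hprod2 : ∀ I K : Finset (Fin N),
      (∏ i ∈ I, x i) * ∏ i ∈ K, x i = (∏ i ∈ I ∪ K, x i) * ∏ i ∈ I ∩ K, x i := by
    intro I K
    rw [hIx I, hIx K, hIx (I ∪ K), hIx (I ∩ K), ← Finset.prod_mul_distrib,
      ← Finset.prod_mul_distrib]
    refine Finset.prod_congr rfl fun i _ => ?_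
    rw [← pow_add, ← pow_add]
    congr 1
    by_cases hI : i ∈ I <;> by_cases hK : i ∈ K <;>
      simp [hI, hK]
  -- main statement
  intro I J
  constructor
  · intro hu
    rw [leibniz x D hrel J, leibniz x D hrel (I ∩ J)]
    rw [← Finset.sum_filter_add_sum_filter_not J.powerset (fun K => I ∪ K = Finset.univ)]
    have hz : ∑ K ∈ J.powerset.filter (fun K => ¬ I ∪ K = Finset.univ),
        (∏ j ∈ J \ K, x j) * D ((∏ i ∈ I, x i) * ∏ k ∈ K, x k) 1 = 0 := by
      refine Finset.sum_eq_zero fun K hK => ?_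
      rw [hvan2 I K (Finset.mem_filter.mp hK).2, mul_zero]
    rw [hz, add_zero]
    refine Finset.sum_bij' (i := fun K _ => I ∩ K) (j := fun K' _ => K' ∪ (Finset.univ \ I))
      ?_ ?_ ?_ ?_ ?_
    · intro K hK
      obtain ⟨hK1, hK2⟩ := Finset.mem_filter.mp hK
      have hKJ : K ⊆ J := Finset.mem_powerset.mp hK1
      exact Finset.mem_powerset.mpr (Finset.inter_subset_inter (Finset.Subset.refl I) hKJ)
    · intro K' hK'
      have hK'IJ : K' ⊆ I ∩ J := Finset.mem_powerset.mp hK'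
      refine Finset.mem_filter.mpr ⟨Finset.mem_powerset.mpr ?_, ?_⟩
      · intro i hi
        rcases Finset.mem_union.mp hi with h | h
        · exact (Finset.mem_inter.mp (hK'IJ h)).2
        · have hiI : i ∉ I := (Finset.mem_sdiff.mp h).2
          have : i ∈ I ∪ J := by rw [hu]; exact Finset.mem_univ i
          rcases Finset.mem_union.mp this with h' | h'
          · exact absurd h' hiI
          · exact h'
      · ext i
        simp only [Finset.mem_union, Finset.mem_sdiff, Finset.mem_univ, true_and,
          Finset.mem_inter]
        constructor
        · intro _; trivial
        · intro _
          by_cases hiI : i ∈ I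
          · exact Or.inl hiI
          · exact Or.inr (Or.inr hiI)
    · intro K hK
      obtain ⟨hK1, hK2⟩ := Finset.mem_filter.mp hK
      have hIcK : Finset.univ \ I ⊆ K := by
        intro i hi
        have hiI : i ∉ I := (Finset.mem_sdiff.mp hi).2
        have : i ∈ I ∪ K := by rw [hK2]; exact Finset.mem_univ i
        rcases Finset.mem_union.mp this with h | h
        · exact absurd h hiI
        · exact h
      ext i
      simp only [Finset.mem_union, Finset.mem_inter, Finset.mem_sdiff, Finset.mem_univ, true_and]
      constructor
      · rintro (⟨_, h⟩ | h)
        · exact h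
        · exact hIcK (Finset.mem_sdiff.mpr ⟨Finset.mem_univ i, h⟩)
      · intro hiK
        by_cases hiI : i ∈ I
        · exact Or.inl ⟨hiI, hiK⟩
        · exact Or.inr hiI
    · intro K' hK'
      have hK'I : K' ⊆ I := fun i hi =>
        (Finset.mem_inter.mp (Finset.mem_powerset.mp hK' hi)).1
      ext i
      simp only [Finset.mem_inter, Finset.mem_union, Finset.mem_sdiff, Finset.mem_univ, true_and]
      constructor
      · rintro ⟨hiI, h | h⟩
        · exact h
        · exact absurd hiI h
      · intro h
        exact ⟨hK'I h, Or.inl h⟩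
    · intro K hK
      obtain ⟨hK1, hK2⟩ := Finset.mem_filter.mp hK
      have hKJ : K ⊆ J := Finset.mem_powerset.mp hK1
      have hIcK : Finset.univ \ I ⊆ K := by
        intro i hi
        have hiI : i ∉ I := (Finset.mem_sdiff.mp hi).2
        have : i ∈ I ∪ K := by rw [hK2]; exact Finset.mem_univ i
        rcases Finset.mem_union.mp this with h | h
        · exact absurd h hiI
        · exact h
      -- term equality
      have hset : J \ K = (I ∩ J) \ (I ∩ K) := by
        ext i
        simp only [Finset.mem_sdiff, Finset.mem_inter]
        constructor
        · rintro ⟨hiJ, hiK⟩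
          have hiI : i ∈ I := by
            by_contra hiI
            exact hiK (hIcK (Finset.mem_sdiff.mpr ⟨Finset.mem_univ i, hiI⟩))
          exact ⟨⟨hiI, hiJ⟩, fun h => hiK h.2⟩
        · rintro ⟨⟨hiI, hiJ⟩, h⟩
          exact ⟨hiJ, fun hiK => h ⟨hiI, hiK⟩⟩
      have hxx : (∏ i ∈ I, x i) * ∏ k ∈ K, x k = (∏ i, x i) * ∏ k ∈ I ∩ K, x k := by
        rw [hprod2 I K, hK2]
      rw [hset, hxx]
  · intro hu
    rw [leibniz x D hrel J]
    refine Finset.sum_eq_zero fun K hK => ?_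
    have hKJ : K ⊆ J := Finset.mem_powerset.mp hK
    have : I ∪ K ≠ Finset.univ := by
      intro h
      apply hu
      have hsub : Finset.univ ⊆ I ∪ J := by
        rw [← h]
        exact Finset.union_subset_union_right hKJ
      exact Finset.univ_subset_iff.mp hsub
    rw [hvan2 I K this, mul_zero]
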